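/- Let X be a measurable space, m ≥ 1, and μ a probability measure on X × Fin m; write y for the second (label) coordinate. Fix l_p ∈ Fin m and set η := μ{(x,y) : y = l_p}; assume 0 < η < 1. Let μ₁ := μ[·|{y = l_p}] and μ₀ := μ[·|{y ≠ l_p}] be the conditional probability measures. Let T₁, T₂ : X → X be measurable maps. Let h, f : X → ℝ^m be measurable with values in [0,1]^m, with ∑_{i ∈ Fin m} h(x)_i = 1 for every x, and let sel : X → Fin m be a measurable selector with h(x)_i ≤ h(x)_{sel(x)} for all x and i. Let ε, τ, Q ≥ 0 and λ ≥ 1 be reals. Assume: (i) ∫ f(T₂ x)_{l_p} dμ₁(x,y) ≤ ε; (ii) for every measurable A ⊆ X, μ₀{(x,y) : T₁ x ∈ A} ≤ λ · μ₁{(x,y) : T₁ x ∈ A}; (iii) ∫ |(h(T₁ x)_{l_p} − f(T₁ x)_{l_p}) − (h(T₂ x)_{l_p} − f(T₂ x)_{l_p})| dμ(x,y) ≤ τ; (iv) ∫ (1 − h(T₂ x)_{l_p}) dμ₁(x,y) ≤ Q. Then μ{(x,y) : sel(T₂ x) ≠ l_p} ≤ 2·(λ·(Q + τ/η + ε) +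 τ + (λ − 1)·η), where the measure on the left is taken as a real number. -/

import Mathlib

open MeasureTheory ProbabilityTheory
open scoped BigOperators

private lemma intg_bdd {α : Type*} [MeasurableSpace α] (ν : Measure α) [IsFiniteMeasure ν]
    {g : α → ℝ} (hg : Measurable g) (C : ℝ) (hC : ∀ x, |g x| ≤ C) :
    Integrable g ν :=
  (integrable_const C).mono' hg.aestronglyMeasurable
    (Filter.Eventually.of_forall fun x => by rw [Real.norm_eq_abs]; exact hC x)

/-- Deterministic core of the poison generalization error bound: under conditions
(i)–(iv) — the trigger `T₁` is adversarial for the clean network `f` on the target class,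
the trigger distribution off the target class is `λ`-dominated by that on the target
class, the backdoor part `h − f` behaves similarly on `T₁ x` and `T₂ x`, and the expected
target-class confidence deficit of `h` on triggered target-class inputs is at most `Q` —
the poison population error `μ{sel(T₂ x) ≠ l_p}` is bounded by
`2(λ(Q + τ/η + ε) + τ + (λ−1)η)`. -/
theorem poison_population_error_bound
    {X : Type*} [MeasurableSpace X] {m : ℕ} (hm : 1 ≤ m)
    (μ : Measure (X × Fin m)) [IsProbabilityMeasure μ] (l_p : Fin m)
    (η : ℝ) (hη : η = (μ {p | p.2 = l_p}).toReal) (hη0 : 0 < η) (hη1 : η < 1)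
    (T₁ T₂ : X → X) (hT₁ : Measurable T₁) (hT₂ : Measurable T₂)
    (h f : X → Fin m → ℝ) (hhm : Measurable h) (hfm : Measurable f)
    (hh01 : ∀ x i, h x i ∈ Set.Icc (0 : ℝ) 1) (hf01 : ∀ x i, f x i ∈ Set.Icc (0 : ℝ) 1)
    (hsum : ∀ x, ∑ i, h x i = 1)
    (sel : X → Fin m) (hsel : Measurable sel) (hmax : ∀ x i, h x i ≤ h x (sel x))
    (ε τ Q lam : ℝ) (hε : 0 ≤ ε) (hτ : 0 ≤ τ) (hQ : 0 ≤ Q) (hlam : 1 ≤ lam)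
    -- (i) the trigger is adversarial for `f` on the target class
    (hyp1 : ∫ p, f (T₂ p.1) l_p ∂(μ[|{p | p.2 = l_p}]) ≤ ε)
    -- (ii) λ-domination of the trigger distribution
    (hyp2 : ∀ A : Set X, MeasurableSet A →
      ((μ[|{p | p.2 ≠ l_p}]) {p | T₁ p.1 ∈ A}).toReal ≤
        lam * ((μ[|{p | p.2 = l_p}]) {p | T₁ p.1 ∈ A}).toReal)
    -- (iii) shortcut-similarity condition for the backdoor part `h − f`
    (hyp3 : ∫ p, |(h (T₁ p.1) l_p - f (T₁ p.1) l_p) -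
        (h (T₂ p.1) l_p - f (T₂ p.1) l_p)| ∂μ ≤ τ)
    -- (iv) confidence-deficit bound on triggered target-class inputs
    (hyp4 : ∫ p, (1 - h (T₂ p.1) l_p) ∂(μ[|{p | p.2 = l_p}]) ≤ Q) :
    (μ {p | sel (T₂ p.1) ≠ l_p}).toReal ≤
      2 * (lam * (Q + τ / η + ε) + τ + (lam - 1) * η) := by
  classical
  -- basic sets
  have hA : MeasurableSet {p : X × Fin m | p.2 = l_p} := by
    have : {p : X × Fin m | p.2 = l_p} = Prod.snd ⁻¹' {l_p} := rfl
    rw [this]; exact measurable_snd (measurableSet_singleton l_p)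
  set A : Set (X × Fin m) := {p | p.2 = l_p} with hAdef
  have hAc_eq : {p : X × Fin m | p.2 ≠ l_p} = Aᶜ := rfl
  rw [hAc_eq] at hyp2
  have hμA_ne_top : μ A ≠ ⊤ := measure_ne_top μ A
  have hμA_toReal : (μ A).toReal = η := hη.symm
  have hμA_ne0 : μ A ≠ 0 := by
    intro h0
    rw [h0, ENNReal.toReal_zero] at hμA_toReal
    linarith
  have hμAc_toReal : (μ Aᶜ).toReal = 1 - η := by
    rw [measure_compl hA hμA_ne_top,
      ENNReal.toReal_sub_of_le (measure_mono (Set.subset_univ A)) (measure_ne_top μ _),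
      measure_univ, ENNReal.toReal_one, hμA_toReal]
  have hμAc_ne0 : μ Aᶜ ≠ 0 := by
    intro h0
    rw [h0, ENNReal.toReal_zero] at hμAc_toReal
    linarith
  haveI hP1 : IsProbabilityMeasure (μ[|A]) := cond_isProbabilityMeasure hμA_ne0
  haveI hP0 : IsProbabilityMeasure (μ[|Aᶜ]) := cond_isProbabilityMeasure hμAc_ne0
  have h1η : (0:ℝ) < 1 - η := by linarith
  -- measurability of the basic real-valued maps
  have hH : Measurable fun x => h x l_p := (measurable_pi_apply l_p).comp hhm
  have hFm : Measurable fun x => f x l_p := (measurable_pi_apply l_p).comp hfm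
  have hS₁ : Measurable fun p : X × Fin m => T₁ p.1 := hT₁.comp measurable_fst
  have hS₂ : Measurable fun p : X × Fin m => T₂ p.1 := hT₂.comp measurable_fst
  -- the integrands
  set g : X → ℝ := fun x => h x l_p - f x l_p with hgdef
  have hgm : Measurable g := hH.sub hFm
  set G : X → ℝ := fun x => 1 - g x with hGdef
  have hGm : Measurable G := measurable_const.sub hgm
  have hG0 : ∀ x, 0 ≤ G x := fun x => by
    have := (hh01 x l_p).2; have := (hf01 x l_p).1
    simp only [hGdef, hgdef]; linarith
  have hGb : ∀ x, |G x| ≤ 2 := fun x => by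
    have := (hh01 x l_p).1; have := (hh01 x l_p).2
    have := (hf01 x l_p).1; have := (hf01 x l_p).2
    simp only [hGdef, hgdef]; rw [abs_le]; constructor <;> linarith
  set F : X × Fin m → ℝ := fun p => 1 - h (T₂ p.1) l_p with hFdef
  have hFmeas : Measurable F := measurable_const.sub (hH.comp hS₂)
  have hFb : ∀ p, |F p| ≤ 1 := fun p => by
    have := (hh01 (T₂ p.1) l_p).1; have := (hh01 (T₂ p.1) l_p).2
    simp only [hFdef]; rw [abs_le]; constructor <;> linarith
  have hF0 : ∀ p, 0 ≤ F p := fun p => by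
    have := (hh01 (T₂ p.1) l_p).2
    simp only [hFdef]; linarith
  set D : X × Fin m → ℝ := fun p => |g (T₁ p.1) - g (T₂ p.1)| with hDdef
  have hDm : Measurable D := ((hgm.comp hS₁).sub (hgm.comp hS₂)).abs
  have hDb : ∀ p, |D p| ≤ 4 := fun p => by
    have h1 := (hh01 (T₁ p.1) l_p).1; have h2 := (hh01 (T₁ p.1) l_p).2
    have h3 := (hf01 (T₁ p.1) l_p).1; have h4 := (hf01 (T₁ p.1) l_p).2
    have h5 := (hh01 (T₂ p.1) l_p).1; have h6 := (hh01 (T₂ p.1) l_p).2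
    have h7 := (hf01 (T₂ p.1) l_p).1; have h8 := (hf01 (T₂ p.1) l_p).2
    simp only [hDdef, hgdef]; rw [abs_abs, abs_le]
    constructor <;> linarith
  have hD0 : ∀ p, 0 ≤ D p := fun p => abs_nonneg _
  have hDμ : ∫ p, D p ∂μ ≤ τ := hyp3
  -- conditional integral formula
  have cond_eq : ∀ (s : Set (X × Fin m)) (φ : X × Fin m → ℝ),
      ∫ p, φ p ∂(μ[|s]) = ((μ s).toReal)⁻¹ * ∫ p in s, φ p ∂μ := by
    intro s φ
    rw [ProbabilityTheory.cond, integral_smul_measure, ENNReal.toReal_inv, smul_eq_mul]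
  -- Step 1 : Markov-type bound
  have step1 : (μ {p | sel (T₂ p.1) ≠ l_p}).toReal ≤ 2 * ∫ p, F p ∂μ := by
    have hbad : MeasurableSet {p : X × Fin m | sel (T₂ p.1) ≠ l_p} := by
      have : {p : X × Fin m | sel (T₂ p.1) ≠ l_p}
          = (fun p : X × Fin m => sel (T₂ p.1)) ⁻¹' {l_p}ᶜ := rfl
      rw [this]
      exact (hsel.comp hS₂) (measurableSet_singleton l_p).compl
    have key : ∀ p, Set.indicator {p : X × Fin m | sel (T₂ p.1) ≠ l_p}
        (fun _ => (1:ℝ)) p ≤ 2 * F p := by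
      intro p
      by_cases hp : p ∈ {p : X × Fin m | sel (T₂ p.1) ≠ l_p}
      · rw [Set.indicator_of_mem hp]
        have hne : sel (T₂ p.1) ≠ l_p := hp
        set x := T₂ p.1 with hx
        have hpair : h x l_p + h x (sel x) ≤ 1 := by
          have hsp : ∑ i ∈ ({l_p, sel x} : Finset (Fin m)), h x i
              = h x l_p + h x (sel x) := Finset.sum_pair (Ne.symm hne)
          have hle : ∑ i ∈ ({l_p, sel x} : Finset (Fin m)), h x i ≤ ∑ i, h x i :=
            Finset.sum_le_sum_of_subset_of_nonneg (Finset.subset_univ _)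
              (fun i _ _ => (hh01 x i).1)
          rw [hsp, hsum x] at hle
          exact hle
        have hlpmax := hmax x l_p
        simp only [hFdef]
        linarith
      · rw [Set.indicator_of_notMem hp]
        have := hF0 p
        linarith
    have hind : Integrable (Set.indicator {p : X × Fin m | sel (T₂ p.1) ≠ l_p}
        (fun _ => (1:ℝ))) μ := (integrable_const (1:ℝ)).indicator hbad
    have h2F : Integrable (fun p => 2 * F p) μ :=
      (intg_bdd μ hFmeas 1 hFb).const_mul 2
    calc (μ {p | sel (T₂ p.1) ≠ l_p}).toReal
        = ∫ p, Set.indicator {p : X × Fin m | sel (T₂ p.1) ≠ l_p} (fun _ => (1:ℝ)) p ∂μ := by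
          exact (integral_indicator_one hbad).symm
      _ ≤ ∫ p, 2 * F p ∂μ := integral_mono hind h2F key
      _ = 2 * ∫ p, F p ∂μ := integral_const_mul 2 F
  -- decomposition of ∫ F over μ
  have hFint : Integrable F μ := intg_bdd μ hFmeas 1 hFb
  have decomp : ∫ p, F p ∂μ = η * ∫ p, F p ∂(μ[|A]) + (1 - η) * ∫ p, F p ∂(μ[|Aᶜ]) := by
    rw [cond_eq A F, cond_eq Aᶜ F, hμA_toReal, hμAc_toReal,
      mul_inv_cancel_left₀ (ne_of_gt hη0), mul_inv_cancel_left₀ (ne_of_gt h1η),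
      integral_add_compl hA hFint]
  -- D-integral bounds on the conditional measures
  have hDset : ∀ s : Set (X × Fin m), ∫ p in s, D p ∂μ ≤ τ := by
    intro s
    exact le_trans (setIntegral_le_integral (intg_bdd μ hDm 4 hDb)
      (Filter.Eventually.of_forall hD0)) hDμ
  have hD1 : ∫ p, D p ∂(μ[|A]) ≤ η⁻¹ * τ := by
    rw [cond_eq A D, hμA_toReal]
    exact mul_le_mul_of_nonneg_left (hDset A) (by positivity)
  have hD0' : ∫ p, D p ∂(μ[|Aᶜ]) ≤ (1 - η)⁻¹ * τ := by
    rw [cond_eq Aᶜ D, hμAc_toReal]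
    exact mul_le_mul_of_nonneg_left (hDset Aᶜ) (by positivity)
  -- integrability on the conditional measures
  have hG₁int : ∀ (ν : Measure (X × Fin m)) [IsProbabilityMeasure ν],
      Integrable (fun p => G (T₁ p.1)) ν := fun ν _ =>
    intg_bdd ν (hGm.comp hS₁) 2 (fun p => hGb _)
  have hG₂int : ∀ (ν : Measure (X × Fin m)) [IsProbabilityMeasure ν],
      Integrable (fun p => G (T₂ p.1)) ν := fun ν _ =>
    intg_bdd ν (hGm.comp hS₂) 2 (fun p => hGb _)
  have hDint : ∀ (ν : Measure (X × Fin m)) [IsProbabilityMeasure ν],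
      Integrable D ν := fun ν _ => intg_bdd ν hDm 4 hDb
  have hFintc : ∀ (ν : Measure (X × Fin m)) [IsProbabilityMeasure ν],
      Integrable F ν := fun ν _ => intg_bdd ν hFmeas 1 hFb
  have hfT₂int : ∀ (ν : Measure (X × Fin m)) [IsProbabilityMeasure ν],
      Integrable (fun p => f (T₂ p.1) l_p) ν := fun ν _ =>
    intg_bdd ν (hFm.comp hS₂) 1 (fun p => abs_le.mpr ⟨by linarith [(hf01 (T₂ p.1) l_p).1],
      (hf01 (T₂ p.1) l_p).2⟩)
  -- pointwise comparisons
  have hFG₂ : ∀ p : X × Fin m, F p ≤ G (T₂ p.1) := fun p => by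
    have := (hf01 (T₂ p.1) l_p).1
    simp only [hFdef, hGdef, hgdef]; linarith
  have hG₂G₁D : ∀ p : X × Fin m, G (T₂ p.1) ≤ G (T₁ p.1) + D p := fun p => by
    have := le_abs_self (g (T₁ p.1) - g (T₂ p.1))
    simp only [hGdef, hDdef]; linarith
  have hG₁G₂D : ∀ p : X × Fin m, G (T₁ p.1) ≤ G (T₂ p.1) + D p := fun p => by
    have := neg_abs_le (g (T₁ p.1) - g (T₂ p.1))
    simp only [hGdef, hDdef]; linarith
  -- G₂ decomposition: G (T₂ p.1) = F p + f (T₂ p.1) l_p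
  have hG₂split : ∀ p : X × Fin m, G (T₂ p.1) = F p + f (T₂ p.1) l_p := fun p => by
    simp only [hGdef, hgdef, hFdef]; ring
  -- ∫ G₂ over μ[|A] ≤ Q + ε
  have hG₂1 : ∫ p, G (T₂ p.1) ∂(μ[|A]) ≤ Q + ε := by
    have : ∫ p, G (T₂ p.1) ∂(μ[|A])
        = ∫ p, F p ∂(μ[|A]) + ∫ p, f (T₂ p.1) l_p ∂(μ[|A]) := by
      rw [← integral_add (hFintc _) (hfT₂int _)]
      exact integral_congr_ae (Filter.Eventually.of_forall hG₂split)
    rw [this]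
    exact add_le_add hyp4 hyp1
  -- ∫ G₁ over μ[|A]
  have hG₁1 : ∫ p, G (T₁ p.1) ∂(μ[|A]) ≤ (Q + ε) + η⁻¹ * τ := by
    calc ∫ p, G (T₁ p.1) ∂(μ[|A]) ≤ ∫ p, (G (T₂ p.1) + D p) ∂(μ[|A]) :=
          integral_mono (hG₁int _) ((hG₂int _).add (hDint _)) hG₁G₂D
      _ = ∫ p, G (T₂ p.1) ∂(μ[|A]) + ∫ p, D p ∂(μ[|A]) :=
          integral_add (hG₂int _) (hDint _)
      _ ≤ (Q + ε) + η⁻¹ * τ := add_le_add hG₂1 hD1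
  -- domination: ∫ G₁ over μ[|Aᶜ] ≤ lam * ∫ G₁ over μ[|A]
  have hdom : ∫ p, G (T₁ p.1) ∂(μ[|Aᶜ]) ≤ lam * ∫ p, G (T₁ p.1) ∂(μ[|A]) := by
    set κ₀ := (μ[|Aᶜ]).map (fun p : X × Fin m => T₁ p.1) with hκ₀
    set κ₁ := (μ[|A]).map (fun p : X × Fin m => T₁ p.1) with hκ₁
    haveI : IsProbabilityMeasure κ₀ := Measure.isProbabilityMeasure_map hS₁.aemeasurable
    haveI : IsProbabilityMeasure κ₁ := Measure.isProbabilityMeasure_map hS₁.aemeasurable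
    have hle : κ₀ ≤ ENNReal.ofReal lam • κ₁ := by
      refine Measure.le_iff.mpr fun s hs => ?_
      have h2 := hyp2 s hs
      have e0 : (μ[|Aᶜ]) {p | T₁ p.1 ∈ s} = κ₀ s := by
        rw [hκ₀, Measure.map_apply hS₁ hs]; rfl
      have e1 : (μ[|A]) {p | T₁ p.1 ∈ s} = κ₁ s := by
        rw [hκ₁, Measure.map_apply hS₁ hs]; rfl
      rw [e0, e1] at h2
      calc κ₀ s = ENNReal.ofReal ((κ₀ s).toReal) :=
            (ENNReal.ofReal_toReal (measure_ne_top _ _)).symm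
        _ ≤ ENNReal.ofReal (lam * (κ₁ s).toReal) := ENNReal.ofReal_le_ofReal h2
        _ = ENNReal.ofReal lam * ENNReal.ofReal ((κ₁ s).toReal) :=
            ENNReal.ofReal_mul (by linarith)
        _ = ENNReal.ofReal lam * κ₁ s := by
            rw [ENNReal.ofReal_toReal (measure_ne_top _ _)]
        _ = (ENNReal.ofReal lam • κ₁) s := by
            rw [Measure.smul_apply, smul_eq_mul]
    have hGint₁ : Integrable G κ₁ := intg_bdd κ₁ hGm 2 hGb
    calc ∫ p, G (T₁ p.1) ∂(μ[|Aᶜ]) = ∫ x, G x ∂κ₀ :=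
          (integral_map hS₁.aemeasurable hGm.aestronglyMeasurable).symm
      _ ≤ ∫ x, G x ∂(ENNReal.ofReal lam • κ₁) :=
          integral_mono_measure hle (Filter.Eventually.of_forall hG0)
            (hGint₁.smul_measure ENNReal.ofReal_ne_top)
      _ = lam * ∫ x, G x ∂κ₁ := by
          rw [integral_smul_measure, ENNReal.toReal_ofReal (by linarith), smul_eq_mul]
      _ = lam * ∫ p, G (T₁ p.1) ∂(μ[|A]) := by
          rw [integral_map hS₁.aemeasurable hGm.aestronglyMeasurable]
  -- ∫ F over μ[|Aᶜ]
  have hI0 : ∫ p, F p ∂(μ[|Aᶜ]) ≤ lam * ((Q + ε) + η⁻¹ * τ) + (1 - η)⁻¹ * τ := by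
    calc ∫ p, F p ∂(μ[|Aᶜ]) ≤ ∫ p, G (T₂ p.1) ∂(μ[|Aᶜ]) :=
          integral_mono (hFintc _) (hG₂int _) hFG₂
      _ ≤ ∫ p, (G (T₁ p.1) + D p) ∂(μ[|Aᶜ]) :=
          integral_mono (hG₂int _) ((hG₁int _).add (hDint _)) hG₂G₁D
      _ = ∫ p, G (T₁ p.1) ∂(μ[|Aᶜ]) + ∫ p, D p ∂(μ[|Aᶜ]) :=
          integral_add (hG₁int _) (hDint _)
      _ ≤ lam * ∫ p, G (T₁ p.1) ∂(μ[|A]) + (1 - η)⁻¹ * τ := add_le_add hdom hD0'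
      _ ≤ lam * ((Q + ε) + η⁻¹ * τ) + (1 - η)⁻¹ * τ := by
          have := mul_le_mul_of_nonneg_left hG₁1 (by linarith : (0:ℝ) ≤ lam)
          linarith
  -- put everything together
  have hI1 : ∫ p, F p ∂(μ[|A]) ≤ Q := hyp4
  have hr : τ / η = η⁻¹ * τ := by rw [div_eq_mul_inv]; ring
  have hmul1 : η * ∫ p, F p ∂(μ[|A]) ≤ η * Q :=
    mul_le_mul_of_nonneg_left hI1 hη0.le
  have hmul0 : (1 - η) * ∫ p, F p ∂(μ[|Aᶜ])
      ≤ (1 - η) * (lam * ((Q + ε) + η⁻¹ * τ)) + τ := by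
    have := mul_le_mul_of_nonneg_left hI0 h1η.le
    have hc : (1 - η) * ((1 - η)⁻¹ * τ) = τ := mul_inv_cancel_left₀ (ne_of_gt h1η) τ
    nlinarith
  have hrτ : 0 ≤ η⁻¹ * τ := by positivity
  have arith : η * Q + ((1 - η) * (lam * ((Q + ε) + η⁻¹ * τ)) + τ)
      ≤ lam * (Q + η⁻¹ * τ + ε) + τ + (lam - 1) * η := by
    nlinarith [mul_nonneg hη0.le (mul_nonneg (by linarith : (0:ℝ) ≤ lam - 1) hQ),
      mul_nonneg hη0.le (mul_nonneg (by linarith : (0:ℝ) ≤ lam) (add_nonneg hε hrτ)),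
      mul_nonneg hη0.le (by linarith : (0:ℝ) ≤ lam - 1)]
  rw [hr]
  calc (μ {p | sel (T₂ p.1) ≠ l_p}).toReal ≤ 2 * ∫ p, F p ∂μ := step1
    _ = 2 * (η * ∫ p, F p ∂(μ[|A]) + (1 - η) * ∫ p, F p ∂(μ[|Aᶜ])) := by rw [decomp]
    _ ≤ 2 * (lam * (Q + η⁻¹ * τ + ε) + τ + (lam - 1) * η) := by linarith
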